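/- Let f : ℝ → ℝ be continuous and set F(t) := ∫_0^t f(s) ds. Suppose there exist θ > 2 and t₀ > 0 such that 0 < θ F(t) ≤ f(t) t for all t ≥ t₀. Then F(t) ≥ (F(t₀)/t₀^θ) · t^θ for all t ≥ t₀. -/

import Mathlib

theorem superlinear_growth_of_primitive (f : ℝ → ℝ) (hf : Continuous f)
    (θ t₀ : ℝ) (hθ : 2 < θ) (ht₀ : 0 < t₀)
    (h : ∀ t : ℝ, t₀ ≤ t →
      0 < θ * (∫ s in (0 : ℝ)..t, f s) ∧ θ * (∫ s in (0 : ℝ)..t, f s) ≤ f t * t) :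
    ∀ t : ℝ, t₀ ≤ t →
      ((∫ s in (0 : ℝ)..t₀, f s) / t₀ ^ θ) * t ^ θ ≤ ∫ s in (0 : ℝ)..t, f s := by
  intro t ht
  set F : ℝ → ℝ := fun x => ∫ s in (0 : ℝ)..x, f s with hF
  have hFd : ∀ x : ℝ, HasDerivAt F (f x) x := by
    intro x
    exact intervalIntegral.integral_hasDerivAt_right
      (hf.intervalIntegrable _ _) (hf.stronglyMeasurableAtFilter _ _) hf.continuousAt
  set g : ℝ → ℝ := fun x => F x * x ^ (-θ) with hg
  have hgd : ∀ x ∈ Set.Ici t₀, HasDerivAt g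
      (f x * x ^ (-θ) + F x * (-θ * x ^ (-θ - 1))) x := by
    intro x hx
    have hx0 : x ≠ 0 := ne_of_gt (lt_of_lt_of_le ht₀ (Set.mem_Ici.mp hx))
    exact (hFd x).mul (Real.hasDerivAt_rpow_const (Or.inl hx0))
  have hmono : MonotoneOn g (Set.Ici t₀) := by
    apply monotoneOn_of_deriv_nonneg (convex_Ici t₀)
    · exact ContinuousOn.congr (fun x hx => ((hgd x hx).continuousAt).continuousWithinAt) (fun x hx => rfl)
    · intro x hx
      rw [interior_Ici] at hx
      exact ((hgd x (Set.Ioi_subset_Ici_self hx)).differentiableAt).differentiableWithinAt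
    · intro x hx
      rw [interior_Ici] at hx
      have hxpos : 0 < x := lt_trans ht₀ hx
      rw [((hgd x (Set.Ioi_subset_Ici_self hx)).deriv)]
      have h1 := (h x (le_of_lt hx)).2
      have key : f x * x ^ (-θ) + F x * (-θ * x ^ (-θ - 1))
          = (f x * x - θ * F x) * x ^ (-θ - 1) := by
        have : x ^ (-θ) = x ^ (-θ - 1) * x := by
          rw [← Real.rpow_add_one hxpos.ne']
          ring_nf
        rw [this]; ring
      rw [key]
      have : 0 ≤ f x * x - θ * F x := by linarith
      positivity
  have := hmono (Set.self_mem_Ici) (Set.mem_Ici.mpr ht) ht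
  -- this : F t₀ * t₀ ^ (-θ) ≤ F t * t ^ (-θ)
  have htpos : 0 < t := lt_of_lt_of_le ht₀ ht
  have ht0p : (0:ℝ) < t₀ ^ θ := Real.rpow_pos_of_pos ht₀ θ
  have htp : (0:ℝ) < t ^ θ := Real.rpow_pos_of_pos htpos θ
  have hneg : ∀ (y : ℝ), 0 < y → y ^ (-θ) = (y ^ θ)⁻¹ := fun y hy => Real.rpow_neg hy.le θ
  simp only [hg] at this
  rw [hneg t₀ ht₀, hneg t htpos] at this
  rw [div_mul_eq_mul_div, div_le_iff₀ ht0p]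
  calc F t₀ * t ^ θ = (F t₀ * (t₀ ^ θ)⁻¹) * t ^ θ * t₀ ^ θ := by
        field_simp
    _ ≤ (F t * (t ^ θ)⁻¹) * t ^ θ * t₀ ^ θ := by
        apply mul_le_mul_of_nonneg_right (mul_le_mul_of_nonneg_right this htp.le) ht0p.le
    _ = F t * t₀ ^ θ := by field_simp
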